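/- Let P : ℂ² → ℝ be a continuous function such that P(μ z₁ + c zₙ, μ zₙ) = P(z₁, zₙ) for all (z₁, zₙ) ∈ ℂ² and all μ, c ∈ ℂ with |μ| = 1 and Re(c μ̄) ≤ 0. Then there exists a function q : ℝ → ℝ such that P(z₁, zₙ) = q(|zₙ|²) for all (z₁, zₙ) ∈ ℂ². (In the paper, this is the step showing that the coefficient functions D_{rq}, which are invariant under the subgroups I and J of S, are functions of |zₙ|² alone.) -/

import Mathlib

/-- A continuous function on ℂ² invariant under the transformations
(z₁, zₙ) ↦ (μz₁ + czₙ, μzₙ), |μ| = 1, Re(cμ̄) ≤ 0 (coming from the subgroups I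
and J of the group S of the paper) is a function of |zₙ|² alone. -/
theorem stmt17 (P : ℂ × ℂ → ℝ) (hP : Continuous P)
    (hinv : ∀ μ c : ℂ, ‖μ‖ = 1 → (c * (starRingEnd ℂ) μ).re ≤ 0 →
      ∀ z : ℂ × ℂ, P (μ * z.1 + c * z.2, μ * z.2) = P z) :
    ∃ q : ℝ → ℝ, ∀ z : ℂ × ℂ, P z = q (‖z.2‖ ^ 2) := by
  -- Translation invariance (μ = 1)
  have htrans : ∀ c : ℂ, c.re ≤ 0 → ∀ z : ℂ × ℂ, P (z.1 + c * z.2, z.2) = P z := by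
    intro c hc z
    have := hinv 1 c (by simp) (by simpa using hc) z
    simpa using this
  -- Rotation invariance (c = 0)
  have hrot : ∀ μ : ℂ, ‖μ‖ = 1 → ∀ z : ℂ × ℂ, P (μ * z.1, μ * z.2) = P z := by
    intro μ hμ z
    have := hinv μ 0 hμ (by simp) z
    simpa using this
  -- Kill the first coordinate when z₂ ≠ 0
  have hzero : ∀ z₁ z₂ : ℂ, z₂ ≠ 0 → P (z₁, z₂) = P (0, z₂) := by
    intro z₁ z₂ hz₂
    set a : ℂ := z₁ / z₂ with ha
    set t : ℂ := ((min a.re 0 - 1 : ℝ) : ℂ) with ht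
    have htre : t.re ≤ 0 := by
      simp only [ht, Complex.ofReal_re]
      have : min a.re 0 ≤ 0 := min_le_right _ _
      linarith
    have h1 : P (z₁, z₂) = P (t * z₂, z₂) := by
      have hre : (t - a).re ≤ 0 := by
        simp only [Complex.sub_re, ht, Complex.ofReal_re]
        have : min a.re 0 ≤ a.re := min_le_left _ _
        linarith
      have := htrans (t - a) hre (z₁, z₂)
      have haz : a * z₂ = z₁ := by
        rw [ha]; exact div_mul_cancel₀ z₁ hz₂
      calc P (z₁, z₂) = P (z₁ + (t - a) * z₂, z₂) := (this).symm
        _ = P (t * z₂, z₂) := by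
            congr 1
            rw [sub_mul, haz]
            ring_nf
    have h2 : P (0, z₂) = P (t * z₂, z₂) := by
      have := htrans t htre (0, z₂)
      simpa using this.symm
    rw [h1, h2]
  -- Rotate z₂ to its modulus
  have hmod : ∀ z₂ : ℂ, z₂ ≠ 0 → P (0, z₂) = P (0, (‖z₂‖ : ℂ)) := by
    intro z₂ hz₂
    have hμ : ‖(((‖z₂‖ : ℝ) : ℂ) / z₂)‖ = 1 := by
      rw [norm_div]
      simp [hz₂]
    have := hrot _ hμ (0, z₂)
    have hm : ((‖z₂‖ : ℝ) : ℂ) / z₂ * z₂ = (‖z₂‖ : ℂ) :=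
      div_mul_cancel₀ _ hz₂
    simp only at this
    rw [mul_zero, hm] at this
    exact this.symm
  -- P(z₁, z₂) = P(0, |z₂|) for z₂ ≠ 0
  have hkey : ∀ z₁ z₂ : ℂ, z₂ ≠ 0 → P (z₁, z₂) = P (0, (‖z₂‖ : ℂ)) := by
    intro z₁ z₂ hz₂
    rw [hzero z₁ z₂ hz₂, hmod z₂ hz₂]
  -- Continuity handles z₂ = 0
  have hz0 : ∀ z₁ : ℂ, P (z₁, 0) = P (0, 0) := by
    intro z₁
    have hg : Continuous fun w : ℂ => P (z₁, w) := hP.comp (by continuity)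
    have hh : Continuous fun w : ℂ => P (0, (‖w‖ : ℂ)) := by
      apply hP.comp
      exact continuous_const.prodMk (Complex.continuous_ofReal.comp continuous_norm)
    have heq : ∀ w : ℂ, w ≠ 0 → P (z₁, w) = P (0, (‖w‖ : ℂ)) := fun w hw =>
      hkey z₁ w hw
    have : (fun w : ℂ => P (z₁, w)) = fun w : ℂ => P (0, (‖w‖ : ℂ)) := by
      apply Continuous.ext_on (dense_compl_singleton (0 : ℂ)) hg hh
      intro w hw
      exact heq w hw
    have := congrFun this 0
    simpa using this
  refine ⟨fun t => P (0, (Real.sqrt t : ℂ)), ?_⟩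
  rintro ⟨z₁, z₂⟩
  by_cases hz₂ : z₂ = 0
  · subst hz₂
    simp [hz0 z₁]
  · have : ‖z₂‖ ^ 2 = ‖z₂‖ * ‖z₂‖ := sq (‖z₂‖)
    simp only [hkey z₁ z₂ hz₂, this]
    rw [Real.sqrt_mul_self (norm_nonneg _)]
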